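/- arXiv:2404.07147 — 2 statements merged into one kernel-verified Lean document; each statement's English description precedes it below -/
import Mathlib

section
/- Let n ≥ 2, let (K_n, λ) be a random simple temporal graph on n vertices, let δ ∈ (0,1), and let k be an integer with 2 ≤ k ≤ n. Then E[X^{(k)}] ≥ (n/k)^k · (k/2)² · δ^{C(k,2)−1} · (1−δ), where C(k,2) = k(k−1)/2. -/
open MeasureTheory ProbabilityTheory
open scoped ENNReal

/-- The edge set of the complete graph `K_n` on vertex set `Fin n`:
unordered pairs of distinct vertices. -/
def EdgeKn (n : ℕ) : Type := {e : Sym2 (Fin n) // ¬ e.IsDiag}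

/-- `Q` is a `δ`-temporal clique for the labeling `lam` if any two edges with
both endpoints in `Q` carry labels at most `δ` apart. -/
def IsTemporalClique {n : ℕ} (lam : EdgeKn n → ℝ) (δ : ℝ) (Q : Finset (Fin n)) : Prop :=
  ∀ e e' : EdgeKn n, (∀ v ∈ e.1, v ∈ Q) → (∀ v ∈ e'.1, v ∈ Q) →
    |lam e - lam e'| ≤ δ

open scoped Classical in
/-- The number of `k`-element vertex subsets of `Fin n` that are `δ`-temporal cliques. -/
noncomputable def cliqueCount {n : ℕ} (lam : EdgeKn n → ℝ) (δ : ℝ) (k : ℕ) : ℕ :=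
  ((Finset.univ.powersetCard k).filter (fun Q => IsTemporalClique lam δ Q)).card

instance (n : ℕ) : Fintype (EdgeKn n) := by unfold EdgeKn; infer_instance

lemma aux_nat_prod (n k : ℕ) (hkn : k ≤ n) : n ^ k * k.factorial ≤ n.descFactorial k * k ^ k := by
  have h1 : k.factorial = ∏ i ∈ Finset.range k, (k - i) := by
    rw [← Finset.prod_range_add_one_eq_factorial]
    rw [← Finset.prod_range_reflect (fun j => j + 1) k]
    apply Finset.prod_congr rfl
    intro i hi
    simp only [Finset.mem_range] at hi
    omega
  rw [h1, Nat.descFactorial_eq_prod_range]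
  rw [show n ^ k = ∏ _i ∈ Finset.range k, n from by simp,
    show k ^ k = ∏ _i ∈ Finset.range k, k from by simp,
    ← Finset.prod_mul_distrib, ← Finset.prod_mul_distrib]
  apply Finset.prod_le_prod'
  intro i hi
  simp only [Finset.mem_range] at hi
  have h2 : i * k ≤ i * n := Nat.mul_le_mul_left i hkn
  calc n * (k - i) = n * k - n * i := by rw [Nat.mul_sub]
    _ ≤ n * k - i * k := Nat.sub_le_sub_left (h2.trans_eq (mul_comm i n)) _
    _ = (n - i) * k := by rw [Nat.sub_mul]

lemma aux_choose (n k : ℕ) (hk : 1 ≤ k) (hkn : k ≤ n) :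
    ((n : ℝ) / k) ^ k ≤ (n.choose k : ℝ) := by
  have h := aux_nat_prod n k hkn
  rw [Nat.descFactorial_eq_factorial_mul_choose] at h
  have hf := Nat.factorial_pos k
  have h2 : n ^ k ≤ n.choose k * k ^ k := by
    have h' : n ^ k * k.factorial ≤ (n.choose k * k ^ k) * k.factorial := by
      calc n ^ k * k.factorial ≤ k.factorial * n.choose k * k ^ k := h
        _ = (n.choose k * k ^ k) * k.factorial := by ring
    exact Nat.le_of_mul_le_mul_right h' hf
  have hkpos : (0:ℝ) < (k:ℝ) := by positivity
  rw [div_pow, div_le_iff₀ (by positivity)]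
  calc ((n:ℝ)) ^ k ≤ ((n.choose k * k ^ k : ℕ) : ℝ) := by exact_mod_cast Nat.cast_le.mpr h2
    _ = (n.choose k : ℝ) * (k:ℝ) ^ k := by push_cast; ring


noncomputable def unif : Measure ℝ := (volume : Measure ℝ).restrict (Set.Icc 0 1)

instance : IsProbabilityMeasure unif := by
  constructor
  rw [unif, Measure.restrict_apply MeasurableSet.univ, Set.univ_inter, Real.volume_Icc]
  norm_num

lemma unif_Ioc {t δ : ℝ} (ht0 : 0 ≤ t) (ht1 : t + δ ≤ 1) :
    unif (Set.Ioc t (t + δ)) = ENNReal.ofReal δ := by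
  rw [unif, Measure.restrict_apply measurableSet_Ioc,
    Set.inter_eq_left.mpr (Set.Ioc_subset_Icc_self.trans (Set.Icc_subset_Icc ht0 ht1)),
    Real.volume_Ioc, add_sub_cancel_left]

lemma unif_Icc {a : ℝ} (ha1 : a ≤ 1) :
    unif (Set.Icc 0 a) = ENNReal.ofReal a := by
  rw [unif, Measure.restrict_apply measurableSet_Icc,
    Set.inter_eq_left.mpr (Set.Icc_subset_Icc le_rfl ha1), Real.volume_Icc, sub_zero]

lemma split_bound {ι : Type*} [Fintype ι] {δ : ℝ} (hδ0 : 0 < δ) (hδ1 : δ < 1)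
    (P : ι → Prop) [DecidablePred P] (i0 : ι) (hP : ∀ j, P j ↔ j = i0) :
    ENNReal.ofReal δ ^ (Fintype.card ι - 1) * ENNReal.ofReal (1 - δ)
      ≤ Measure.pi (fun _ : ι => unif) {x | ∀ j, ¬ P j → x j - x i0 ∈ Set.Ioc 0 δ} := by
  haveI : Unique (Subtype P) :=
    ⟨⟨⟨i0, (hP i0).mpr rfl⟩⟩, fun j => Subtype.ext ((hP _).mp j.2)⟩
  have hone : Fintype.card (Subtype P) = 1 := Fintype.card_unique
  have hcard : Fintype.card {j // ¬ P j} = Fintype.card ι - 1 := by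
    rw [Fintype.card_subtype_compl, hone]
  set i0' : Subtype P := ⟨i0, (hP i0).mpr rfl⟩ with hi0'
  have hval : ∀ u : Subtype P → ℝ, u i0' = u i0' := fun _ => rfl
  set C : Set ((Subtype P → ℝ) × ({j // ¬ P j} → ℝ)) :=
    {z | ∀ j : {j // ¬ P j}, z.2 j - z.1 i0' ∈ Set.Ioc 0 δ} with hCdef
  have hC : MeasurableSet C := by
    have : C = ⋂ j : {j // ¬ P j},
        (fun z : (Subtype P → ℝ) × ({j // ¬ P j} → ℝ) => z.2 j - z.1 i0') ⁻¹' Set.Ioc 0 δ := by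
      ext z; simp [hCdef, Set.mem_iInter]
    rw [this]
    exact MeasurableSet.iInter fun j =>
      (((measurable_pi_apply j).comp measurable_snd).sub
        ((measurable_pi_apply i0').comp measurable_fst)) measurableSet_Ioc
  have hBC : {x : ι → ℝ | ∀ j, ¬ P j → x j - x i0 ∈ Set.Ioc 0 δ}
      = (MeasurableEquiv.piEquivPiSubtypeProd (fun _ : ι => ℝ) P) ⁻¹' C := by
    ext x
    simp only [Set.mem_setOf_eq, Set.mem_preimage,
      MeasurableEquiv.piEquivPiSubtypeProd, Equiv.piEquivPiSubtypeProd,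
      MeasurableEquiv.coe_mk, Equiv.coe_fn_mk, hCdef]
    constructor
    · intro h j
      have := h j.1 j.2
      simpa [hi0'] using this
    · intro h j hj
      have := h ⟨j, hj⟩
      simpa [hi0'] using this
  rw [hBC, (measurePreserving_piEquivPiSubtypeProd (fun _ : ι => unif) P).measure_preimage
    hC.nullMeasurableSet, Measure.prod_apply hC]
  have hsection : ∀ u : Subtype P → ℝ,
      Prod.mk u ⁻¹' C = Set.pi Set.univ (fun _ : {j // ¬ P j} => Set.Ioc (u i0') (u i0' + δ)) := by
    intro u
    ext y
    simp only [Set.mem_preimage, hCdef, Set.mem_setOf_eq, Set.mem_univ_pi, Set.mem_Ioc]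
    refine forall_congr' fun j => ?_
    constructor <;> intro h <;> constructor <;> linarith [h.1, h.2]
  have hinner : ∀ u : Subtype P → ℝ,
      (Measure.pi fun _ : {j // ¬ P j} => unif) (Prod.mk u ⁻¹' C)
        = unif (Set.Ioc (u i0') (u i0' + δ)) ^ (Fintype.card ι - 1) := by
    intro u
    rw [hsection, Measure.pi_pi, Finset.prod_const, Finset.card_univ, hcard]
  simp_rw [hinner]
  set s : Set (Subtype P → ℝ) := (fun u => u i0') ⁻¹' Set.Icc 0 (1 - δ) with hs
  have hsmeas : MeasurableSet s := (measurable_pi_apply i0') measurableSet_Icc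
  calc ENNReal.ofReal δ ^ (Fintype.card ι - 1) * ENNReal.ofReal (1 - δ)
      = ∫⁻ _ in s, ENNReal.ofReal δ ^ (Fintype.card ι - 1)
          ∂(Measure.pi fun _ : Subtype P => unif) := by
        rw [setLIntegral_const]
        congr 1
        have : s = Set.pi Set.univ (fun _ : Subtype P => Set.Icc 0 (1 - δ)) := by
          ext u
          simp only [hs, Set.mem_preimage, Set.mem_univ_pi]
          exact ⟨fun h j => by rw [Unique.eq_default j, ← Unique.eq_default i0']; exact h,
            fun h => h i0'⟩
        rw [this, Measure.pi_pi, Finset.prod_const, Finset.card_univ, hone,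
          pow_one, unif_Icc (by linarith)]
    _ = ∫⁻ u in s, unif (Set.Ioc (u i0') (u i0' + δ)) ^ (Fintype.card ι - 1)
          ∂(Measure.pi fun _ : Subtype P => unif) := by
        refine setLIntegral_congr_fun hsmeas fun u hu => ?_
        rw [unif_Ioc hu.1 (by linarith [hu.2])]
    _ ≤ _ := setLIntegral_le_lintegral _ _

lemma core {ι : Type*} [Fintype ι] [Nonempty ι] {δ : ℝ} (hδ0 : 0 < δ) (hδ1 : δ < 1) :
    ENNReal.ofReal ((Fintype.card ι : ℝ) * δ ^ (Fintype.card ι - 1) * (1 - δ))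
      ≤ Measure.pi (fun _ : ι => unif) {x | ∀ i j, |x i - x j| ≤ δ} := by
  classical
  set m := Fintype.card ι with hm
  set μ := Measure.pi (fun _ : ι => unif) with hμ
  set B : ι → Set (ι → ℝ) := fun i0 => {x | ∀ j, ¬ (j = i0) → x j - x i0 ∈ Set.Ioc 0 δ} with hB
  have hBmeas : ∀ i0, MeasurableSet (B i0) := by
    intro i0
    have : B i0 = ⋂ j, ⋂ (_ : ¬ (j = i0)), (fun x : ι → ℝ => x j - x i0) ⁻¹' Set.Ioc 0 δ := by
      ext x; simp [hB, Set.mem_iInter]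
    rw [this]
    exact MeasurableSet.iInter fun j => MeasurableSet.iInter fun _ =>
      ((measurable_pi_apply j).sub (measurable_pi_apply i0)) measurableSet_Ioc
  have hBlow : ∀ i0, ENNReal.ofReal δ ^ (m - 1) * ENNReal.ofReal (1 - δ) ≤ μ (B i0) :=
    fun i0 => split_bound hδ0 hδ1 (fun j => j = i0) i0 (fun _ => Iff.rfl)
  have hdisj : Pairwise (Function.onFun Disjoint B) := by
    intro i j hij
    rw [Function.onFun, Set.disjoint_left]
    intro x hxi hxj
    have h1 := (hxi j (Ne.symm hij)).1
    have h2 := (hxj i hij).1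
    linarith
  have hsub : (⋃ i0, B i0) ⊆ {x : ι → ℝ | ∀ i j, |x i - x j| ≤ δ} := by
    intro x hx
    rw [Set.mem_iUnion] at hx
    obtain ⟨i0, hx⟩ := hx
    intro a b
    rw [abs_sub_le_iff]
    by_cases ha : a = i0 <;> by_cases hb : b = i0
    · subst ha; subst hb; constructor <;> linarith
    · subst ha
      obtain ⟨h1, h2⟩ := hx b hb
      constructor <;> linarith
    · subst hb
      obtain ⟨h1, h2⟩ := hx a ha
      constructor <;> linarith
    · obtain ⟨h1, h2⟩ := hx a ha
      obtain ⟨h3, h4⟩ := hx b hb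
      constructor <;> linarith
  calc ENNReal.ofReal ((m : ℝ) * δ ^ (m - 1) * (1 - δ))
      = (m : ℝ≥0∞) * (ENNReal.ofReal δ ^ (m - 1) * ENNReal.ofReal (1 - δ)) := by
        rw [ENNReal.ofReal_mul (by positivity), ENNReal.ofReal_mul (by positivity),
          ENNReal.ofReal_natCast, ENNReal.ofReal_pow hδ0.le, mul_assoc]
    _ = ∑ _i0 : ι, (ENNReal.ofReal δ ^ (m - 1) * ENNReal.ofReal (1 - δ)) := by
        rw [Finset.sum_const, Finset.card_univ, nsmul_eq_mul, hm]
    _ ≤ ∑ i0 : ι, μ (B i0) := Finset.sum_le_sum fun i0 _ => hBlow i0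
    _ = μ (⋃ i0, B i0) := by rw [measure_iUnion hdisj hBmeas, tsum_fintype]
    _ ≤ _ := measure_mono hsub

lemma map_joint {Ω : Type*} [MeasurableSpace Ω] (P : Measure Ω) [IsProbabilityMeasure P]
    {ι : Type*} [Fintype ι] (f : ι → Ω → ℝ) (hmeas : ∀ i, Measurable (f i))
    (hindep : iIndepFun f P) (hunif : ∀ i, P.map (f i) = unif) :
    P.map (fun ω i => f i ω) = Measure.pi (fun _ : ι => unif) := by
  refine (Measure.pi_eq fun s hs => ?_).symm
  have hjm : Measurable (fun ω i => f i ω) := measurable_pi_lambda _ fun i => hmeas i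
  rw [Measure.map_apply hjm (MeasurableSet.univ_pi hs)]
  have hpre : (fun ω i => f i ω) ⁻¹' Set.pi Set.univ s = ⋂ i, f i ⁻¹' s i := by
    ext ω; simp [Set.mem_univ_pi, Set.mem_iInter]
  rw [hpre, hindep.meas_iInter (fun i => ⟨s i, hs i, rfl⟩)]
  refine Finset.prod_congr rfl fun i _ => ?_
  rw [← hunif i, Measure.map_apply (hmeas i) (hs i)]

lemma card_edges (n : ℕ) (Q : Finset (Fin n)) :
    Fintype.card {e : EdgeKn n // ∀ v ∈ e.1, v ∈ Q} = Q.card.choose 2 := by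
  classical
  have key : ∀ z : Sym2 (Fin n),
      z ∈ Q.offDiag.image (Function.uncurry Sym2.mk) ↔ (¬ z.IsDiag ∧ ∀ v ∈ z, v ∈ Q) := by
    intro z
    induction z using Sym2.ind with
    | _ a b =>
      constructor
      · intro hz
        obtain ⟨⟨c, d⟩, hcd, hmk⟩ := Finset.mem_image.mp hz
        obtain ⟨hc, hd, hne⟩ := Finset.mem_offDiag.mp hcd
        simp only [Function.uncurry_apply_pair] at hmk
        rw [Sym2.eq_iff] at hmk
        constructor
        · rw [Sym2.isDiag_iff_proj_eq]
          rcases hmk with ⟨rfl, rfl⟩ | ⟨rfl, rfl⟩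
          · exact hne
          · exact hne.symm
        · intro v hv
          rw [Sym2.mem_iff] at hv
          rcases hmk with ⟨rfl, rfl⟩ | ⟨rfl, rfl⟩ <;> rcases hv with rfl | rfl <;> assumption
      · rintro ⟨hdiag, hmem⟩
        rw [Sym2.isDiag_iff_proj_eq] at hdiag
        refine Finset.mem_image.mpr ⟨(a, b), Finset.mem_offDiag.mpr
          ⟨hmem a (Sym2.mem_mk_left a b), hmem b (Sym2.mem_mk_right a b), hdiag⟩, rfl⟩
  calc Fintype.card {e : EdgeKn n // ∀ v ∈ e.1, v ∈ Q}
      = Fintype.card {z : Sym2 (Fin n) // z ∈ Q.offDiag.image (Function.uncurry Sym2.mk)} :=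
        Fintype.card_congr
          { toFun := fun x => ⟨x.1.1, (key _).mpr ⟨x.1.2, x.2⟩⟩
            invFun := fun s => ⟨⟨s.1, ((key _).mp s.2).1⟩, ((key _).mp s.2).2⟩
            left_inv := fun x => rfl
            right_inv := fun s => rfl }
    _ = (Q.offDiag.image (Function.uncurry Sym2.mk)).card := Fintype.card_coe _
    _ = Q.card.choose 2 := Sym2.card_image_offDiag Q

/-- In the random simple temporal graph `(K_n, λ)`, for constant `δ ∈ (0,1)` and
`2 ≤ k ≤ n`, the expected number of `δ`-temporal cliques of size `k` is at least
`(n/k)^k · (k/2)² · δ^(C(k,2)-1) · (1-δ)`. -/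
theorem stmt7
    {Ω : Type*} [MeasurableSpace Ω] (P : Measure Ω) [IsProbabilityMeasure P]
    (n : ℕ) (hn : 2 ≤ n)
    (lam : EdgeKn n → Ω → ℝ) (hmeas : ∀ e, Measurable (lam e))
    (hindep : iIndepFun lam P)
    (hunif : ∀ e, Measure.map (lam e) P = (volume : Measure ℝ).restrict (Set.Icc 0 1))
    (δ : ℝ) (hδ0 : 0 < δ) (hδ1 : δ < 1) (k : ℕ) (hk2 : 2 ≤ k) (hkn : k ≤ n) :
    ∫ ω, (cliqueCount (fun e => lam e ω) δ k : ℝ) ∂P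
      ≥ ((n : ℝ) / (k : ℝ)) ^ k * ((k : ℝ) / 2) ^ 2 * δ ^ (k.choose 2 - 1) * (1 - δ) := by
  classical
  set m := k.choose 2 with hmdef
  have hm1 : 1 ≤ m := Nat.choose_pos hk2
  set T := (Finset.univ : Finset (Fin n)).powersetCard k with hT
  set Ev : Finset (Fin n) → Set Ω :=
    fun Q => {ω | IsTemporalClique (fun e => lam e ω) δ Q} with hEv
  have hEvmeas : ∀ Q, MeasurableSet (Ev Q) := by
    intro Q
    have : Ev Q = ⋂ (e : EdgeKn n), ⋂ (e' : EdgeKn n), ⋂ (_ : ∀ v ∈ e.1, v ∈ Q),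
        ⋂ (_ : ∀ v ∈ e'.1, v ∈ Q), (fun ω => |lam e ω - lam e' ω|) ⁻¹' Set.Iic δ := by
      ext ω
      simp [hEv, IsTemporalClique, Set.mem_iInter]
    rw [this]
    exact MeasurableSet.iInter fun e => MeasurableSet.iInter fun e' =>
      MeasurableSet.iInter fun _ => MeasurableSet.iInter fun _ =>
        (((hmeas e).sub (hmeas e')).abs) measurableSet_Iic
  have hjoint : P.map (fun ω (e : EdgeKn n) => lam e ω)
      = Measure.pi (fun _ : EdgeKn n => unif) :=
    map_joint P lam hmeas hindep (fun e => hunif e)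
  set c : ℝ := (m : ℝ) * δ ^ (m - 1) * (1 - δ) with hc
  have hc0 : 0 ≤ c :=
    mul_nonneg (mul_nonneg (Nat.cast_nonneg m) (by positivity)) (by linarith)
  -- per-Q bound
  have hQbound : ∀ Q ∈ T, c ≤ (P (Ev Q)).toReal := by
    intro Q hQ
    have hQcard : Q.card = k := (Finset.mem_powersetCard_univ.mp hQ)
    set p : EdgeKn n → Prop := fun e => ∀ v ∈ e.1, v ∈ Q with hp
    have hcardp : Fintype.card (Subtype p) = m := by
      rw [Fintype.card_congr' (α := Subtype p)
        (β := {e : EdgeKn n // ∀ v ∈ e.1, v ∈ Q}) rfl, card_edges n Q, hQcard]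
    haveI : Nonempty (Subtype p) := Fintype.card_pos_iff.mp (by rw [hcardp]; omega)
    set E2 : Set (Subtype p → ℝ) := {y | ∀ i j, |y i - y j| ≤ δ} with hE2
    have hE2meas : MeasurableSet E2 := by
      have : E2 = ⋂ (i : Subtype p), ⋂ (j : Subtype p),
          (fun y : Subtype p → ℝ => |y i - y j|) ⁻¹' Set.Iic δ := by
        ext y; simp [hE2, Set.mem_iInter]
      rw [this]
      exact MeasurableSet.iInter fun i => MeasurableSet.iInter fun j =>
        (((measurable_pi_apply i).sub (measurable_pi_apply j)).abs) measurableSet_Iic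
    set E' : Set (EdgeKn n → ℝ) := {x | ∀ e e', p e → p e' → |x e - x e'| ≤ δ} with hE'
    have hE'split : E' = (MeasurableEquiv.piEquivPiSubtypeProd (fun _ : EdgeKn n => ℝ) p)
        ⁻¹' (E2 ×ˢ Set.univ) := by
      ext x
      simp only [hE', Set.mem_setOf_eq, Set.mem_preimage,
        MeasurableEquiv.piEquivPiSubtypeProd, Equiv.piEquivPiSubtypeProd,
        MeasurableEquiv.coe_mk, Equiv.coe_fn_mk, Set.mem_prod, Set.mem_univ, and_true, hE2]
      constructor
      · intro h i j; exact h i.1 j.1 i.2 j.2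
      · intro h e e' he he'; exact h ⟨e, he⟩ ⟨e', he'⟩
    have hE'meas : MeasurableSet E' := by
      rw [hE'split]
      exact (MeasurableEquiv.piEquivPiSubtypeProd (fun _ : EdgeKn n => ℝ) p).measurable
        (hE2meas.prod MeasurableSet.univ)
    have hEvE' : Ev Q = (fun ω (e : EdgeKn n) => lam e ω) ⁻¹' E' := by
      ext ω
      simp only [hEv, Set.mem_setOf_eq, Set.mem_preimage, hE', IsTemporalClique, hp]
    have hPev : P (Ev Q) = Measure.pi (fun _ : Subtype p => unif) E2 := by
      rw [hEvE', ← Measure.map_apply (measurable_pi_lambda _ fun e => hmeas e) hE'meas,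
        hjoint, hE'split,
        (measurePreserving_piEquivPiSubtypeProd (fun _ : EdgeKn n => unif) p).measure_preimage
          (hE2meas.prod MeasurableSet.univ).nullMeasurableSet,
        Measure.prod_prod, measure_univ, mul_one]
    have hlow := core (ι := Subtype p) hδ0 hδ1
    rw [hcardp] at hlow
    rw [hPev]
    exact (ENNReal.ofReal_le_iff_le_toReal (measure_ne_top _ _)).mp hlow
  have hcount : ∀ ω, (cliqueCount (fun e => lam e ω) δ k : ℝ)
      = ∑ Q ∈ T, Set.indicator (Ev Q) (fun _ => (1:ℝ)) ω := by
    intro ω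
    rw [cliqueCount, Finset.card_filter]
    push_cast
    refine Finset.sum_congr rfl fun Q _ => ?_
    simp only [Set.indicator_apply, hEv, Set.mem_setOf_eq]
  have hint : ∫ ω, (cliqueCount (fun e => lam e ω) δ k : ℝ) ∂P
      = ∑ Q ∈ T, (P (Ev Q)).toReal := by
    rw [show (fun ω => (cliqueCount (fun e => lam e ω) δ k : ℝ))
      = fun ω => ∑ Q ∈ T, Set.indicator (Ev Q) (fun _ => (1:ℝ)) ω from funext hcount]
    rw [integral_finset_sum T fun Q _ => (integrable_const (1:ℝ)).indicator (hEvmeas Q)]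
    refine Finset.sum_congr rfl fun Q _ => ?_
    rw [integral_indicator_const (1:ℝ) (hEvmeas Q), smul_eq_mul, mul_one, measureReal_def]
  rw [ge_iff_le, hint]
  have hTcard : T.card = n.choose k := by
    rw [hT, Finset.card_powersetCard, Finset.card_univ, Fintype.card_fin]
  have hsum : (n.choose k : ℝ) * c ≤ ∑ Q ∈ T, (P (Ev Q)).toReal := by
    calc (n.choose k : ℝ) * c = ∑ _Q ∈ T, c := by
          rw [Finset.sum_const, hTcard, nsmul_eq_mul]
      _ ≤ _ := Finset.sum_le_sum hQbound
  refine le_trans ?_ hsum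
  have hA := aux_choose n k (by omega) hkn
  have hB : ((k:ℝ)/2)^2 ≤ (m:ℝ) := by
    have h2 : (2:ℝ) ≤ (k:ℝ) := by exact_mod_cast hk2
    rw [hmdef, Nat.cast_choose_two]
    nlinarith
  have hd : (0:ℝ) ≤ δ ^ (m-1) := by positivity
  have he : (0:ℝ) ≤ 1 - δ := by linarith
  have ha0 : (0:ℝ) ≤ ((n:ℝ)/k)^k := by positivity
  have hb0 : (0:ℝ) ≤ ((k:ℝ)/2)^2 := by positivity
  calc ((n:ℝ)/k)^k * ((k:ℝ)/2)^2 * δ ^ (m - 1) * (1-δ)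
      ≤ (n.choose k : ℝ) * (m:ℝ) * δ^(m-1) * (1-δ) := by
        apply mul_le_mul_of_nonneg_right _ he
        apply mul_le_mul_of_nonneg_right _ hd
        exact mul_le_mul hA hB hb0 (le_trans ha0 hA)
    _ = (n.choose k : ℝ) * c := by rw [hc]; ring
end

section
/- Let δ ∈ (0,1) and ε > 0 be constants, and for each n ≥ 2 let (K_n, λ) be a random simple temporal graph on n vertices. Let k_0(n) = 2 ln n / ln(1/δ). Then the probability that (K_n, λ) contains a δ-temporal clique of size at least ⌈(1+ε)·k_0(n)⌉ tends to 0 as n → ∞. -/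
open MeasureTheory ProbabilityTheory

instance inst_s14 (n : ℕ) : Fintype (EdgeKn n) := by unfold EdgeKn; infer_instance
instance (n : ℕ) : Countable (EdgeKn n) := by unfold EdgeKn; infer_instance

open scoped Classical in
lemma card_edges_in (n : ℕ) (Q : Finset (Fin n)) :
    Q.card.choose 2 ≤ (Finset.univ.filter (fun e : EdgeKn n => ∀ v ∈ e.1, v ∈ Q)).card := by
  classical
  have hcard : Fintype.card {a : Sym2 {x : Fin n // x ∈ Q} // ¬ a.IsDiag} = Q.card.choose 2 := by
    rw [Sym2.card_subtype_not_diag, Fintype.card_coe]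
  rw [← hcard, ← Finset.card_univ]
  apply Finset.card_le_card_of_injOn
    (fun a => (⟨a.1.map (fun x => x.1), by
      obtain ⟨a, ha⟩ := a
      induction a using Sym2.ind with
      | _ x y =>
        simp only [Sym2.map_pair_eq, Sym2.isDiag_iff_proj_eq] at *
        exact fun h => ha (Subtype.ext h)⟩ : EdgeKn n))
  · intro a _
    refine Finset.mem_coe.mpr (Finset.mem_filter.mpr ⟨Finset.mem_univ _, ?_⟩)
    intro v hv
    obtain ⟨w, hw, rfl⟩ := Sym2.mem_map.mp hv
    exact w.2
  · intro a _ b _ hab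
    have hinj : Function.Injective (fun x : {x : Fin n // x ∈ Q} => x.1) := Subtype.val_injective
    exact Subtype.ext (Sym2.map.injective hinj (congrArg Subtype.val hab))

lemma meas_inter_le {n : ℕ} {Ω : Type*} [MeasurableSpace Ω]
    (P : Measure Ω) [IsProbabilityMeasure P]
    (lam : EdgeKn n → Ω → ℝ) (hmeas : ∀ e, Measurable (lam e))
    (hindep : iIndepFun lam P)
    (hunif : ∀ e, Measure.map (lam e) P = (volume : Measure ℝ).restrict (Set.Icc 0 1))
    (S : Finset (EdgeKn n)) (a ρ : ℝ) :
    P (⋂ e ∈ S, (lam e)⁻¹' (Set.Icc a (a + ρ))) ≤ (ENNReal.ofReal ρ) ^ S.card := by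
  rw [hindep.meas_biInter (fun e _ => ⟨Set.Icc a (a+ρ), measurableSet_Icc, rfl⟩)]
  have hone : ∀ e ∈ S, P ((lam e)⁻¹' (Set.Icc a (a + ρ))) ≤ ENNReal.ofReal ρ := by
    intro e _
    rw [← Measure.map_apply (hmeas e) measurableSet_Icc, hunif e,
      Measure.restrict_apply measurableSet_Icc]
    calc volume (Set.Icc a (a+ρ) ∩ Set.Icc 0 1) ≤ volume (Set.Icc a (a+ρ)) :=
          measure_mono Set.inter_subset_left
      _ = ENNReal.ofReal ρ := by rw [Real.volume_Icc]; ring_nf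
  calc ∏ e ∈ S, P ((lam e)⁻¹' (Set.Icc a (a + ρ)))
      ≤ ∏ _e ∈ S, ENNReal.ofReal ρ := Finset.prod_le_prod' hone
    _ = (ENNReal.ofReal ρ) ^ S.card := Finset.prod_const _

open scoped Classical in
lemma cover {n : ℕ} {Ω : Type*} (lam : EdgeKn n → Ω → ℝ)
    (δ ρ : ℝ) (hδ0 : 0 < δ) (hδρ : δ < ρ) (k : ℕ) (hk : 2 ≤ k) :
    {ω | ∃ Q : Finset (Fin n), k ≤ Q.card ∧ IsTemporalClique (fun e => lam e ω) δ Q} ⊆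
      (⋃ e : EdgeKn n, {ω | lam e ω ∉ Set.Icc (0:ℝ) 1}) ∪
      ⋃ Q ∈ Finset.univ.powersetCard k, ⋃ j ∈ Finset.range (⌈1/(ρ-δ)⌉₊ + 1),
        ⋂ e ∈ Finset.univ.filter (fun e : EdgeKn n => ∀ v ∈ e.1, v ∈ Q),
          (lam e)⁻¹' (Set.Icc (j*(ρ-δ)) (j*(ρ-δ) + ρ)) := by
  classical
  set s := ρ - δ with hs
  have hs0 : 0 < s := by simp [hs]; linarith
  intro ω hω
  obtain ⟨Q, hQcard, hQcl⟩ := hω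
  by_cases hbad : ∃ e : EdgeKn n, lam e ω ∉ Set.Icc (0:ℝ) 1
  · left; exact Set.mem_iUnion.mpr hbad
  · right
    push_neg at hbad
    obtain ⟨Q', hQQ', hQ'card⟩ := Finset.exists_subset_card_eq hQcard
    have hQ'cl : IsTemporalClique (fun e => lam e ω) δ Q' := fun e e' he he' =>
      hQcl e e' (fun v hv => hQQ' (he v hv)) (fun v hv => hQQ' (he' v hv))
    set S := Finset.univ.filter (fun e : EdgeKn n => ∀ v ∈ e.1, v ∈ Q') with hS
    have hSne : S.Nonempty := by
      obtain ⟨a, ha, b, hb, hab⟩ := Finset.one_lt_card.mp (by omega : 1 < Q'.card)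
      refine ⟨⟨s(a,b), by simp [hab]⟩, ?_⟩
      refine Finset.mem_filter.mpr ⟨Finset.mem_univ _, ?_⟩
      intro v hv
      rcases Sym2.mem_iff.mp hv with rfl | rfl <;> assumption
    have hFne : (S.image (fun e => lam e ω)).Nonempty := hSne.image _
    set x := (S.image (fun e => lam e ω)).min' hFne with hx
    obtain ⟨e₀, he₀S, he₀⟩ := Finset.mem_image.mp ((S.image (fun e => lam e ω)).min'_mem hFne)
    have hx01 : x ∈ Set.Icc (0:ℝ) 1 := by rw [hx, ← he₀]; exact hbad e₀
    have hxle : ∀ e ∈ S, x ≤ lam e ω := fun e he =>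
      Finset.min'_le _ _ (Finset.mem_image_of_mem _ he)
    have hxup : ∀ e ∈ S, lam e ω ≤ x + δ := by
      intro e he
      have := hQ'cl e e₀ (Finset.mem_filter.mp he).2 (Finset.mem_filter.mp he₀S).2
      have := abs_le.mp this
      simp only [he₀] at *
      linarith [this.1, this.2]
    set j := ⌊x/s⌋₊ with hj
    have hjN : j ∈ Finset.range (⌈1/s⌉₊ + 1) := by
      rw [Finset.mem_range, Nat.lt_succ_iff]
      calc j ≤ ⌊1/s⌋₊ := Nat.floor_le_floor (by
              rw [div_le_div_iff_of_pos_right hs0]; exact hx01.2)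
        _ ≤ ⌈1/s⌉₊ := Nat.floor_le_ceil _
    have hjx : (j:ℝ)*s ≤ x := by
      rw [← le_div_iff₀ hs0]
      exact Nat.floor_le (div_nonneg hx01.1 hs0.le)
    have hxj : x ≤ j*s + s := by
      have h1 : x/s < (j:ℝ) + 1 := by exact_mod_cast Nat.lt_floor_add_one (x/s)
      have h2 : x < ((j:ℝ)+1)*s := by
        rw [← div_lt_iff₀ hs0] at *; linarith
      nlinarith
    refine Set.mem_iUnion₂.mpr ⟨Q', ?_, Set.mem_iUnion₂.mpr ⟨j, hjN, ?_⟩⟩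
    · simpa [Finset.mem_powersetCard_univ] using hQ'card
    · apply Set.mem_biInter
      intro e he
      constructor
      · exact le_trans hjx (hxle e he)
      · have := hxup e he
        have : lam e ω ≤ j*s + s + δ := by linarith
        simpa [hs] using this.trans_eq (by ring)

lemma main_bound {n : ℕ} {Ω : Type*} [MeasurableSpace Ω]
    (P : Measure Ω) [IsProbabilityMeasure P]
    (lam : EdgeKn n → Ω → ℝ) (hmeas : ∀ e, Measurable (lam e))
    (hindep : iIndepFun lam P)
    (hunif : ∀ e, Measure.map (lam e) P = (volume : Measure ℝ).restrict (Set.Icc 0 1))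
    (δ ρ : ℝ) (hδ0 : 0 < δ) (hδρ : δ < ρ) (hρ1 : ρ ≤ 1) (k : ℕ) (hk : 2 ≤ k) :
    P {ω | ∃ Q : Finset (Fin n), k ≤ Q.card ∧ IsTemporalClique (fun e => lam e ω) δ Q} ≤
      (n ^ k : ℕ) * (⌈1/(ρ-δ)⌉₊ + 1) * (ENNReal.ofReal ρ) ^ k.choose 2 := by
  classical
  have hbad : P (⋃ e : EdgeKn n, {ω | lam e ω ∉ Set.Icc (0:ℝ) 1}) = 0 := by
    apply measure_iUnion_null
    intro e
    have : {ω | lam e ω ∉ Set.Icc (0:ℝ) 1} = (lam e)⁻¹' (Set.Icc (0:ℝ) 1)ᶜ := rfl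
    rw [this, ← Measure.map_apply (hmeas e) measurableSet_Icc.compl, hunif e,
      Measure.restrict_apply measurableSet_Icc.compl]
    simp
  calc P {ω | ∃ Q : Finset (Fin n), k ≤ Q.card ∧ IsTemporalClique (fun e => lam e ω) δ Q}
      ≤ P ((⋃ e : EdgeKn n, {ω | lam e ω ∉ Set.Icc (0:ℝ) 1}) ∪
          ⋃ Q ∈ Finset.univ.powersetCard k, ⋃ j ∈ Finset.range (⌈1/(ρ-δ)⌉₊ + 1),
            ⋂ e ∈ Finset.univ.filter (fun e : EdgeKn n => ∀ v ∈ e.1, v ∈ Q),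
              (lam e)⁻¹' (Set.Icc (j*(ρ-δ)) (j*(ρ-δ) + ρ))) :=
        measure_mono (cover lam δ ρ hδ0 hδρ k hk)
    _ ≤ P (⋃ e : EdgeKn n, {ω | lam e ω ∉ Set.Icc (0:ℝ) 1}) +
        P (⋃ Q ∈ Finset.univ.powersetCard k, ⋃ j ∈ Finset.range (⌈1/(ρ-δ)⌉₊ + 1),
            ⋂ e ∈ Finset.univ.filter (fun e : EdgeKn n => ∀ v ∈ e.1, v ∈ Q),
              (lam e)⁻¹' (Set.Icc (j*(ρ-δ)) (j*(ρ-δ) + ρ))) := measure_union_le _ _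
    _ = P (⋃ Q ∈ Finset.univ.powersetCard k, ⋃ j ∈ Finset.range (⌈1/(ρ-δ)⌉₊ + 1),
            ⋂ e ∈ Finset.univ.filter (fun e : EdgeKn n => ∀ v ∈ e.1, v ∈ Q),
              (lam e)⁻¹' (Set.Icc (j*(ρ-δ)) (j*(ρ-δ) + ρ))) := by rw [hbad, zero_add]
    _ ≤ ∑ Q ∈ Finset.univ.powersetCard k, ∑ j ∈ Finset.range (⌈1/(ρ-δ)⌉₊ + 1),
          P (⋂ e ∈ Finset.univ.filter (fun e : EdgeKn n => ∀ v ∈ e.1, v ∈ Q),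
              (lam e)⁻¹' (Set.Icc (j*(ρ-δ)) (j*(ρ-δ) + ρ))) := by
        refine (measure_biUnion_finset_le _ _).trans (Finset.sum_le_sum fun Q _ => ?_)
        exact measure_biUnion_finset_le _ _
    _ ≤ ∑ Q ∈ Finset.univ.powersetCard k, ∑ _j ∈ Finset.range (⌈1/(ρ-δ)⌉₊ + 1),
          (ENNReal.ofReal ρ) ^ k.choose 2 := by
        refine Finset.sum_le_sum fun Q hQ => Finset.sum_le_sum fun j _ => ?_
        have hQk : Q.card = k := (Finset.mem_powersetCard_univ).mp hQ
        calc P (⋂ e ∈ Finset.univ.filter (fun e : EdgeKn n => ∀ v ∈ e.1, v ∈ Q),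
              (lam e)⁻¹' (Set.Icc (j*(ρ-δ)) (j*(ρ-δ) + ρ)))
            ≤ (ENNReal.ofReal ρ) ^ (Finset.univ.filter (fun e : EdgeKn n => ∀ v ∈ e.1, v ∈ Q)).card :=
              meas_inter_le P lam hmeas hindep hunif _ _ _
          _ ≤ (ENNReal.ofReal ρ) ^ k.choose 2 := by
              apply pow_le_pow_of_le_one (by positivity) (by
                simpa using ENNReal.ofReal_le_one.mpr hρ1)
              rw [← hQk]; exact card_edges_in n Q
    _ = (Finset.univ.powersetCard k : Finset (Finset (Fin n))).card *
          ((⌈1/(ρ-δ)⌉₊ + 1) * (ENNReal.ofReal ρ) ^ k.choose 2) := by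
        simp [Finset.sum_const, mul_assoc]
    _ ≤ (n ^ k : ℕ) * (⌈1/(ρ-δ)⌉₊ + 1) * (ENNReal.ofReal ρ) ^ k.choose 2 := by
        rw [Finset.card_powersetCard, Finset.card_univ, Fintype.card_fin, mul_assoc]
        gcongr
        exact_mod_cast Nat.cast_le.mpr (Nat.choose_le_pow n k)

open Filter in
lemma real_tendsto (δ ε : ℝ) (hδ0 : 0 < δ) (hδ1 : δ < 1) (hε : 0 < ε) (ρ C : ℝ)
    (hC : 0 ≤ C) (hρ0 : 0 < ρ) (hρ1 : ρ < 1)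
    (hlρ : Real.log ρ ≤ -((1+ε/2)/(1+ε) * Real.log (1/δ))) :
    Tendsto (fun n : ℕ => (n:ℝ)^(⌈(1+ε)*(2*Real.log n/Real.log (1/δ))⌉₊) * C *
      ρ^((⌈(1+ε)*(2*Real.log n/Real.log (1/δ))⌉₊).choose 2)) atTop (nhds 0) := by
  set L := Real.log (1/δ) with hLdef
  have hL : 0 < L := Real.log_pos (one_lt_one_div hδ0 hδ1)
  set a₀ := (1+ε/2)/(1+ε) * L with ha₀def
  have ha₀ : 0 < a₀ := by positivity
  set A := -Real.log ρ with hAdef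
  have hA0 : 0 < A := by
    simp only [hAdef, neg_pos]
    exact Real.log_neg hρ0 hρ1
  have ha₀A : a₀ ≤ A := by simp only [hAdef]; linarith
  have hlog : Tendsto (fun n : ℕ => Real.log n) atTop atTop :=
    Real.tendsto_log_atTop.comp tendsto_natCast_atTop_atTop
  have hu : Tendsto (fun n : ℕ => C * Real.exp (-((ε/4) * Real.log n))) atTop (nhds 0) := by
    have h1 : Tendsto (fun n : ℕ => (ε/4) * Real.log n) atTop atTop :=
      hlog.const_mul_atTop (by positivity)
    have h2 : Tendsto (fun n : ℕ => -((ε/4) * Real.log n)) atTop atBot :=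
      tendsto_neg_atBot_iff.mpr h1
    have h3 := Real.tendsto_exp_atBot.comp h2
    have h4 := h3.const_mul C
    simpa using h4
  apply tendsto_of_tendsto_of_tendsto_of_le_of_le' tendsto_const_nhds hu
  · filter_upwards with n
    positivity
  · filter_upwards [hlog.eventually_ge_atTop (max (2*A/ε) (L/(1+ε))),
      eventually_ge_atTop 1] with n hln hn1
    set c := Real.log n with hcdef
    have hc1 : 2*A/ε ≤ c := le_trans (le_max_left _ _) hln
    have hc2 : L/(1+ε) ≤ c := le_trans (le_max_right _ _) hln
    have hc0 : 0 ≤ c := le_trans (by positivity) hc1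
    set k := ⌈(1+ε)*(2*c/L)⌉₊ with hkdef
    have hkc : (1+ε)*(2*c/L) ≤ (k:ℝ) := Nat.le_ceil _
    have hk2R : (2:ℝ) ≤ (k:ℝ) := by
      refine le_trans ?_ hkc
      rw [div_le_iff₀ (by positivity)] at hc2
      have he : (1+ε)*(2*c/L) = 2*(c*(1+ε))/L := by ring
      rw [he, le_div_iff₀ hL]
      linarith
    have hk1 : (1:ℝ) ≤ (k:ℝ) := by linarith
    have hn0 : (0:ℝ) < n := by exact_mod_cast hn1
    have hnc : (n:ℝ) = Real.exp c := (Real.exp_log hn0).symm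
    have hm : ((k.choose 2 : ℕ) : ℝ) = (k:ℝ) * ((k:ℝ) - 1) / 2 := Nat.cast_choose_two (K := ℝ) k
    have hρA : ρ = Real.exp (-A) := by
      simp only [hAdef, neg_neg]
      exact (Real.exp_log hρ0).symm
    have hterm : (n:ℝ)^k * C * ρ^(k.choose 2) =
        C * Real.exp ((k:ℝ)*c - ((k.choose 2 : ℕ) : ℝ)*A) := by
      rw [hnc, hρA, ← Real.exp_nat_mul, ← Real.exp_nat_mul, mul_comm, ← mul_assoc,
        ← Real.exp_add]
      ring_nf
    rw [hterm]
    have hkey : (k:ℝ)*c - ((k.choose 2 : ℕ) : ℝ)*A ≤ -((ε/4) * c) := by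
      rw [hm]
      set kR := (k:ℝ)
      have hkA : (1+ε)*(2*c/L)*(A/2) ≤ kR*(A/2) :=
        mul_le_mul_of_nonneg_right hkc (by positivity)
      have he1 : (1+ε)*(2*c/L)*(A/2) = (1+ε)*c/L*A := by ring
      have hAa : (1+ε)*c/L*a₀ ≤ (1+ε)*c/L*A :=
        mul_le_mul_of_nonneg_left ha₀A (by positivity)
      have he2 : (1+ε)*c/L*a₀ = (1+ε/2)*c := by
        rw [ha₀def]; field_simp
      have h1 : (1+ε/2)*c - A/2 ≤ (kR-1)/2*A := by
        rw [he2] at hAa; rw [he1] at hkA; linarith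
      have h3 : A/2 - (ε/2)*c ≤ -((ε/4)*c) := by
        rw [div_le_iff₀ hε] at hc1; linarith
      have hstep : c - (kR-1)/2*A ≤ -((ε/4)*c) := by linarith
      have hneg : -((ε/4)*c) ≤ 0 := neg_nonpos.mpr (by positivity)
      calc kR*c - kR*(kR-1)/2*A = kR*(c - (kR-1)/2*A) := by ring
        _ ≤ kR*(-((ε/4)*c)) := mul_le_mul_of_nonneg_left hstep (by linarith)
        _ ≤ 1*(-((ε/4)*c)) := mul_le_mul_of_nonpos_right hk1 (by linarith)
        _ = -((ε/4)*c) := one_mul _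
    exact mul_le_mul_of_nonneg_left (Real.exp_le_exp.mpr hkey) hC

open Filter in
/-- For constants `δ ∈ (0,1)` and `ε > 0`, with `k₀(n) = 2 ln n / ln(1/δ)`,
the probability that `(K_n, λ)` contains a `δ`-temporal clique of size at least
`⌈(1+ε) k₀(n)⌉` tends to `0` as `n → ∞`. -/
theorem stmt14
    (δ : ℝ) (hδ0 : 0 < δ) (hδ1 : δ < 1) (ε : ℝ) (hε : 0 < ε)
    {Ω : ℕ → Type*} [∀ n, MeasurableSpace (Ω n)]
    (P : ∀ n, Measure (Ω n)) (hP : ∀ n, IsProbabilityMeasure (P n))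
    (lam : ∀ n, EdgeKn n → Ω n → ℝ) (hmeas : ∀ n e, Measurable (lam n e))
    (hindep : ∀ n, iIndepFun (lam n) (P n))
    (hunif : ∀ n e, Measure.map (lam n e) (P n) = (volume : Measure ℝ).restrict (Set.Icc 0 1)) :
    Tendsto
      (fun n =>
        P n {ω | ∃ Q : Finset (Fin n),
          ⌈(1 + ε) * (2 * Real.log n / Real.log (1/δ))⌉₊ ≤ Q.card ∧
          IsTemporalClique (fun e => lam n e ω) δ Q})
      atTop (nhds 0) := by
  classical
  have hL : 0 < Real.log (1/δ) := Real.log_pos (one_lt_one_div hδ0 hδ1)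
  set ρ₀ := Real.exp (-((1+ε/2)/(1+ε) * Real.log (1/δ))) with hρ₀def
  have hδexp : δ = Real.exp (-Real.log (1/δ)) := by
    rw [one_div, Real.log_inv, neg_neg, Real.exp_log hδ0]
  have hfrac : (1+ε/2)/(1+ε) < 1 := by
    rw [div_lt_one (by positivity)]; linarith
  have hδρ₀ : δ < ρ₀ := by
    rw [hδexp, hρ₀def]
    apply Real.exp_lt_exp.mpr
    rw [neg_lt_neg_iff]
    nlinarith
  have hρ₀1 : ρ₀ < 1 := by
    rw [hρ₀def]
    apply Real.exp_lt_one_iff.mpr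
    rw [neg_lt, neg_zero]
    positivity
  set ρ := (δ + ρ₀)/2 with hρdef
  have hδρ : δ < ρ := by rw [hρdef]; linarith
  have hρ0 : 0 < ρ := lt_trans hδ0 hδρ
  have hρρ₀ : ρ < ρ₀ := by rw [hρdef]; linarith
  have hρ1 : ρ < 1 := lt_trans hρρ₀ hρ₀1
  have hlρ : Real.log ρ ≤ -((1+ε/2)/(1+ε) * Real.log (1/δ)) := by
    calc Real.log ρ ≤ Real.log ρ₀ := Real.log_le_log hρ0 hρρ₀.le
      _ = -((1+ε/2)/(1+ε) * Real.log (1/δ)) := by rw [hρ₀def, Real.log_exp]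
  set N : ℕ := ⌈1/(ρ-δ)⌉₊ + 1 with hNdef
  have hreal := real_tendsto δ ε hδ0 hδ1 hε ρ (N:ℝ) (by positivity) hρ0 hρ1 hlρ
  have henn : Tendsto (fun n : ℕ => ENNReal.ofReal
      ((n:ℝ)^(⌈(1+ε)*(2*Real.log n/Real.log (1/δ))⌉₊) * (N:ℝ) *
        ρ^((⌈(1+ε)*(2*Real.log n/Real.log (1/δ))⌉₊).choose 2))) atTop (nhds 0) := by
    have := (ENNReal.continuous_ofReal.tendsto 0).comp hreal
    simpa [Function.comp_def] using this
  have hlog : Tendsto (fun n : ℕ => Real.log n) atTop atTop :=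
    Real.tendsto_log_atTop.comp tendsto_natCast_atTop_atTop
  apply tendsto_of_tendsto_of_tendsto_of_le_of_le' tendsto_const_nhds henn
  · filter_upwards with n
    exact bot_le
  · filter_upwards [hlog.eventually_ge_atTop (Real.log (1/δ)/(1+ε))] with n hln
    set k := ⌈(1+ε)*(2*Real.log n/Real.log (1/δ))⌉₊ with hkdef
    have hk2 : 2 ≤ k := by
      have h2r : (2:ℝ) ≤ (1+ε)*(2*Real.log n/Real.log (1/δ)) := by
        rw [div_le_iff₀ (by positivity)] at hln
        have he : (1+ε)*(2*Real.log n/Real.log (1/δ))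
            = 2*(Real.log n*(1+ε))/Real.log (1/δ) := by ring
        rw [he, le_div_iff₀ hL]
        linarith
      calc (2:ℕ) = ⌈(2:ℝ)⌉₊ := by simp
        _ ≤ k := Nat.ceil_le_ceil h2r
    have hb := main_bound (P n) (lam n) (hmeas n) (hindep n) (hunif n)
      δ ρ hδ0 hδρ hρ1.le k hk2
    refine hb.trans ?_
    have hcast : ((n ^ k : ℕ) : ENNReal) * ((⌈1/(ρ-δ)⌉₊ : ENNReal) + 1) *
        (ENNReal.ofReal ρ) ^ k.choose 2 =
        ENNReal.ofReal ((n:ℝ)^k * (N:ℝ) * ρ^(k.choose 2)) := by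
      rw [ENNReal.ofReal_mul (by positivity), ENNReal.ofReal_mul (by positivity),
        ENNReal.ofReal_pow hρ0.le, ENNReal.ofReal_natCast]
      congr 1
      congr 1
      · rw [← ENNReal.ofReal_natCast (n^k)]
        norm_cast
      · rw [hNdef]
        push_cast
        ring_nf
    exact le_of_eq hcast
end
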